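/- For every nonempty coordinated shape X ⊂ ℤ², the grid graph induced by the 2-scaling X² has a Hamiltonian cycle, i.e., a cycle that visits every point of X² exactly once. -/

import Mathlib

set_option maxHeartbeats 1000000

/-- The `c`-scaling of a set `X ⊆ ℤ²`:
`X^c = {(a,b) : (⌊a/c⌋, ⌊b/c⌋) ∈ X}` (floor division). -/
def scaling (X : Set (ℤ × ℤ)) (c : ℕ) : Set (ℤ × ℤ) :=
  {p | (Int.fdiv p.1 (c : ℤ), Int.fdiv p.2 (c : ℤ)) ∈ X}

/-- The grid graph induced by `Y ⊆ ℤ²`: vertices are the points of `Y` and edges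
connect exactly those pairs of points at `ℓ¹`-distance 1. -/
def gridGraph (Y : Set (ℤ × ℤ)) : SimpleGraph Y where
  Adj p q := |p.1.1 - q.1.1| + |p.1.2 - q.1.2| = 1
  symm := by
    constructor
    intro p q h
    rw [abs_sub_comm, abs_sub_comm (q.1.2)]
    exact h
  loopless := by
    constructor
    intro p h
    simp at h

namespace HamAux

abbrev P2 := ℤ × ℤ

def adjp (p q : P2) : Prop := |p.1 - q.1| + |p.2 - q.2| = 1

lemma adjp_iff {p q : P2} : adjp p q ↔
    (p.1 = q.1 ∧ (p.2 = q.2 + 1 ∨ q.2 = p.2 + 1)) ∨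
    (p.2 = q.2 ∧ (p.1 = q.1 + 1 ∨ q.1 = p.1 + 1)) := by
  unfold adjp
  rcases abs_cases (p.1 - q.1) with ⟨h1, h1'⟩ | ⟨h1, h1'⟩ <;>
    rcases abs_cases (p.2 - q.2) with ⟨h2, h2'⟩ | ⟨h2, h2'⟩ <;> omega

lemma adjp_symm {p q : P2} (h : adjp p q) : adjp q p := by
  rw [adjp_iff] at h ⊢; omega

lemma adjp_irrefl {p q : P2} (h : adjp p q) : p ≠ q := by
  rw [adjp_iff] at h
  intro he; subst he; omega

lemma gridGraph_adj {Y : Set P2} {p q : Y} : (gridGraph Y).Adj p q ↔ adjp p.1 q.1 := Iff.rfl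

def cell (p : P2) : P2 := (p.1.fdiv 2, p.2.fdiv 2)

lemma fdiv2_eq {a b : ℤ} : a.fdiv 2 = b ↔ a = 2*b ∨ a = 2*b + 1 := by
  rw [Int.fdiv_eq_ediv_of_nonneg _ (by norm_num)]
  omega

lemma cell_eq {p d : P2} : cell p = d ↔
    (p.1 = 2*d.1 ∨ p.1 = 2*d.1 + 1) ∧ (p.2 = 2*d.2 ∨ p.2 = 2*d.2 + 1) := by
  unfold cell
  rw [Prod.ext_iff]
  simp only [fdiv2_eq]

lemma mem_scaling {X : Set P2} {p : P2} : p ∈ scaling X 2 ↔ cell p ∈ X := by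
  simp [scaling, cell]

def dirs : List P2 := [(1,0),(-1,0),(0,1),(0,-1)]

/-- the two points of the block of `d` on side `e` -/
def side (d e : P2) : P2 × P2 :=
  if e = ((1:ℤ),(0:ℤ)) then ((2*d.1+1, 2*d.2), (2*d.1+1, 2*d.2+1))
  else if e = ((-1:ℤ),(0:ℤ)) then ((2*d.1, 2*d.2), (2*d.1, 2*d.2+1))
  else if e = ((0:ℤ),(1:ℤ)) then ((2*d.1, 2*d.2+1), (2*d.1+1, 2*d.2+1))
  else ((2*d.1, 2*d.2), (2*d.1+1, 2*d.2))

def sideS (d e : P2) : Sym2 P2 := s((side d e).1, (side d e).2)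

lemma side_cell {d e : P2} (he : e ∈ dirs) : cell (side d e).1 = d ∧ cell (side d e).2 = d := by
  simp only [dirs, List.mem_cons, List.not_mem_nil, or_false] at he
  rcases he with rfl | rfl | rfl | rfl <;>
    refine ⟨?_, ?_⟩ <;> (rw [cell_eq]; norm_num [side, Prod.ext_iff]; try omega)

lemma side_inj {d d' e e' : P2} (he : e ∈ dirs) (he' : e' ∈ dirs)
    (h : sideS d e = sideS d' e') : d = d' ∧ e = e' := by
  have hd : d = d' := by
    have h1 := (side_cell (d := d) he).1
    have h2 := (side_cell (d := d') he').1
    have h3 := (side_cell (d := d') he').2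
    rw [sideS, sideS, Sym2.eq_iff] at h
    rcases h with ⟨ha, _⟩ | ⟨ha, _⟩
    · rw [← h1, ha, h2]
    · rw [← h1, ha, h3]
  subst hd
  refine ⟨rfl, ?_⟩
  simp only [dirs, List.mem_cons, List.not_mem_nil, or_false] at he he'
  rw [sideS, sideS, Sym2.eq_iff] at h
  rcases he with rfl | rfl | rfl | rfl <;> rcases he' with rfl | rfl | rfl | rfl <;>
    first
      | rfl
      | (exfalso; norm_num [side, Prod.ext_iff] at h)
      | (exfalso; norm_num [side, Prod.ext_iff] at h; omega)





def cedges : List α → List (Sym2 α)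
  | a :: b :: t => s(a, b) :: cedges (b :: t)
  | _ => []

@[simp] lemma cedges_nil : cedges ([] : List α) = [] := rfl
@[simp] lemma cedges_single (a : α) : cedges [a] = [] := rfl
@[simp] lemma cedges_cons₂ (a b : α) (t : List α) :
    cedges (a :: b :: t) = s(a, b) :: cedges (b :: t) := rfl

lemma mem_of_mem_cedges {l : List α} {E : Sym2 α} (hE : E ∈ cedges l) {x : α}
    (hx : x ∈ E) : x ∈ l := by
  induction l with
  | nil => simp [cedges] at hE
  | cons a t ih =>
    match t, hE with
    | b :: t, hE =>
      rcases List.mem_cons.1 hE with rfl | hE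
      · rcases Sym2.mem_iff.1 hx with rfl | rfl <;> simp
      · exact List.mem_cons_of_mem _ (ih hE)

lemma cedges_append (A : List α) (x : α) (B : List α) :
    cedges (A ++ x :: B) = cedges (A ++ [x]) ++ cedges (x :: B) := by
  induction A with
  | nil => simp
  | cons a A ih =>
    match A, ih with
    | [], _ => simp
    | a' :: A, ih => simpa using congrArg (s(a, a') :: ·) ih

lemma exists_of_mem_cedges {l : List α} {p q : α} (h : s(p, q) ∈ cedges l) :
    ∃ A B, l = A ++ p :: q :: B ∨ l = A ++ q :: p :: B := by
  induction l with
  | nil => simp [cedges] at h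
  | cons a t ih =>
    match t, h with
    | b :: t, h =>
      rcases List.mem_cons.1 h with he | h
      · rcases Sym2.eq_iff.1 he.symm with ⟨rfl, rfl⟩ | ⟨rfl, rfl⟩
        · exact ⟨[], t, Or.inl rfl⟩
        · exact ⟨[], t, Or.inr rfl⟩
      · obtain ⟨A, B, hAB | hAB⟩ := ih h
        · exact ⟨a :: A, B, Or.inl (by simp [hAB])⟩
        · exact ⟨a :: A, B, Or.inr (by simp [hAB])⟩

lemma cedges_map {β : Type*} (f : α → β) (l : List α) :
    cedges (l.map f) = (cedges l).map (Sym2.map f) := by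
  induction l with
  | nil => simp
  | cons a t ih =>
    match t, ih with
    | [], _ => simp
    | b :: t, ih => simpa using ih

lemma perm_mid (l1 ns l2 : List α) : (l1 ++ ns ++ l2).Perm (ns ++ (l1 ++ l2)) := by
  calc (l1 ++ ns ++ l2).Perm ((ns ++ l1) ++ l2) :=
        (List.perm_append_comm (l₁ := l1) (l₂ := ns)).append_right l2
    _ = (ns ++ (l1 ++ l2)) := by simp



lemma splice {A B : List P2} {p q n1 n2 n3 n4 : P2}
    (hch : (A ++ p::q::B).Chain' adjp)
    (hcyc : (A ++ p::q::B).head? = (A ++ p::q::B).getLast?)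
    (hnd : (A ++ p::q::B).tail.Nodup)
    (hed : (cedges (A ++ p::q::B)).Nodup)
    (a1 : adjp p n1) (a2 : adjp n1 n2) (a3 : adjp n2 n3) (a4 : adjp n3 n4) (a5 : adjp n4 q)
    (hns : ([n1,n2,n3,n4] : List P2).Nodup)
    (hfresh : ∀ m ∈ ([n1,n2,n3,n4] : List P2), m ∉ A ++ p::q::B) :
    (A ++ p::n1::n2::n3::n4::q::B).Chain' adjp ∧
    (A ++ p::n1::n2::n3::n4::q::B).head? = (A ++ p::n1::n2::n3::n4::q::B).getLast? ∧
    (A ++ p::n1::n2::n3::n4::q::B).tail.Nodup ∧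
    (cedges (A ++ p::n1::n2::n3::n4::q::B)).Nodup ∧
    (∀ x, x ∈ A ++ p::n1::n2::n3::n4::q::B ↔ x ∈ A ++ p::q::B ∨ x ∈ ([n1,n2,n3,n4] : List P2)) ∧
    (∀ E ∈ cedges (A ++ p::q::B), E ≠ s(p,q) → E ∈ cedges (A ++ p::n1::n2::n3::n4::q::B)) ∧
    (∀ E ∈ ([s(p,n1),s(n1,n2),s(n2,n3),s(n3,n4),s(n4,q)] : List (Sym2 P2)),
        E ∈ cedges (A ++ p::n1::n2::n3::n4::q::B)) := by
  have hp : p ∈ A ++ p::q::B := by simp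
  have hq : q ∈ A ++ p::q::B := by simp
  have hLd : cedges (A ++ p::q::B) = cedges (A ++ [p]) ++ s(p,q) :: cedges (q::B) := by
    rw [cedges_append A p (q::B)]; rfl
  have hL'd : cedges (A ++ p::n1::n2::n3::n4::q::B)
      = cedges (A ++ [p]) ++ s(p,n1) :: s(n1,n2) :: s(n2,n3) :: s(n3,n4) :: s(n4,q)
        :: cedges (q::B) := by
    rw [cedges_append A p (n1::n2::n3::n4::q::B)]; rfl
  have hn1 : n1 ∉ A ++ p::q::B := hfresh n1 (by simp)
  have hn2 : n2 ∉ A ++ p::q::B := hfresh n2 (by simp)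
  have hn3 : n3 ∉ A ++ p::q::B := hfresh n3 (by simp)
  have hn4 : n4 ∉ A ++ p::q::B := hfresh n4 (by simp)
  have hd12 : n1 ≠ n2 := by simp at hns; tauto
  have hd13 : n1 ≠ n3 := by simp at hns; tauto
  have hd14 : n1 ≠ n4 := by simp at hns; tauto
  have hd23 : n2 ≠ n3 := by simp at hns; tauto
  have hd24 : n2 ≠ n4 := by simp at hns; tauto
  have hd34 : n3 ≠ n4 := by simp at hns; tauto
  have hchsp := (List.isChain_split (l₁ := A) (l₂ := q::B) (c := p)).1 hch
  have hpq : adjp p q := (List.isChain_cons_cons.1 hchsp.2).1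
  have hpqne : p ≠ q := adjp_irrefl hpq
  have hchq : (q::B).Chain' adjp := (List.isChain_cons_cons.1 hchsp.2).2
  refine ⟨?_, ?_, ?_, ?_, ?_, ?_, ?_⟩
  · -- Chain'
    exact (List.isChain_split (l₁ := A) (l₂ := n1::n2::n3::n4::q::B) (c := p)).2
      ⟨hchsp.1, by
        refine List.isChain_cons_cons.2 ⟨a1, List.isChain_cons_cons.2 ⟨a2, List.isChain_cons_cons.2 ⟨a3,
          List.isChain_cons_cons.2 ⟨a4, List.isChain_cons_cons.2 ⟨a5, hchq⟩⟩⟩⟩⟩⟩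
  · -- head? = getLast?
    have hg : ∀ (C : List P2) (x : P2) (D : List P2), (C ++ x :: D).getLast? = (x :: D).getLast? := by
      intro C x D
      rw [List.getLast?_append]
      rw [List.getLast?_eq_getLast (by simp)]
      rfl
    have e1 : A ++ p::q::B = (A ++ [p]) ++ q :: B := by simp
    have e2 : A ++ p::n1::n2::n3::n4::q::B = (A ++ [p,n1,n2,n3,n4]) ++ q :: B := by simp
    rw [e2, hg]
    rw [e1, hg] at hcyc
    rw [← e1] at hcyc
    rw [← e2]
    rw [← hcyc]
    cases A <;> simp
  · -- tail nodup
    have hmemtail : ∀ m ∈ ([n1,n2,n3,n4] : List P2), m ∉ (A ++ p::q::B).tail :=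
      fun m hm hmt => hfresh m hm (List.tail_subset _ hmt)
    cases A with
    | nil =>
      simp only [List.nil_append, List.tail_cons] at hnd hmemtail ⊢
      have : (n1::n2::n3::n4::q::B) = [n1,n2,n3,n4] ++ (q::B) := by simp
      rw [this]
      refine List.Nodup.append hns hnd ?_
      intro x hx
      exact hmemtail x hx
    | cons a A =>
      simp only [List.cons_append, List.tail_cons] at hnd hmemtail ⊢
      have he : A ++ p::n1::n2::n3::n4::q::B = (A ++ [p]) ++ [n1,n2,n3,n4] ++ (q::B) := by simp
      have hperm := perm_mid (A ++ [p]) ([n1,n2,n3,n4]) (q::B)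
      rw [he, (List.Perm.nodup_iff hperm)]
      have he2 : (A ++ [p]) ++ (q::B) = A ++ p::q::B := by simp
      rw [he2]
      refine List.Nodup.append hns hnd ?_
      intro x hx
      exact hmemtail x hx
  · -- cedges nodup
    rw [hL'd]
    have hperm := perm_mid (cedges (A ++ [p]))
      ([s(p,n1),s(n1,n2),s(n2,n3),s(n3,n4),s(n4,q)]) (cedges (q::B))
    have he : cedges (A ++ [p]) ++ s(p,n1)::s(n1,n2)::s(n2,n3)::s(n3,n4)::s(n4,q)::cedges (q::B)
        = cedges (A ++ [p]) ++ [s(p,n1),s(n1,n2),s(n2,n3),s(n3,n4),s(n4,q)] ++ cedges (q::B) := by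
      simp
    rw [he, List.Perm.nodup_iff hperm]
    have hold : (cedges (A ++ [p]) ++ cedges (q::B)).Nodup ∧
        s(p,q) ∉ cedges (A ++ [p]) ++ cedges (q::B) := by
      have h0 : (s(p,q) :: (cedges (A ++ [p]) ++ cedges (q::B))).Nodup := by
        rw [hLd] at hed
        exact (List.perm_middle (a := s(p,q)) (l₁ := cedges (A ++ [p]))
          (l₂ := cedges (q::B))).nodup_iff.1 hed
      exact ⟨(List.nodup_cons.1 h0).2, (List.nodup_cons.1 h0).1⟩
    have hsub : ∀ E ∈ cedges (A ++ [p]) ++ cedges (q::B), ∀ x ∈ E, x ∈ A ++ p::q::B := by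
      intro E hE x hx
      refine mem_of_mem_cedges (l := A ++ p::q::B) ?_ hx
      rw [hLd]
      rcases List.mem_append.1 hE with h | h
      · exact List.mem_append.2 (Or.inl h)
      · exact List.mem_append.2 (Or.inr (List.mem_cons_of_mem _ h))
    refine List.Nodup.append ?_ hold.1 ?_
    · have hpn1 : p ≠ n1 := fun h => hn1 (h ▸ hp)
      have hpn2 : p ≠ n2 := fun h => hn2 (h ▸ hp)
      have hpn3 : p ≠ n3 := fun h => hn3 (h ▸ hp)
      have hpn4 : p ≠ n4 := fun h => hn4 (h ▸ hp)
      have hqn1 : q ≠ n1 := fun h => hn1 (h ▸ hq)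
      have hqn2 : q ≠ n2 := fun h => hn2 (h ▸ hq)
      have hqn3 : q ≠ n3 := fun h => hn3 (h ▸ hq)
      have e1 : s(p,n1) ≠ s(n1,n2) := by
        intro h; rcases Sym2.eq_iff.1 h with ⟨h',h''⟩|⟨h',h''⟩
        exacts [hpn1 h', hpn2 h']
      have e2 : s(p,n1) ≠ s(n2,n3) := by
        intro h; rcases Sym2.eq_iff.1 h with ⟨h',h''⟩|⟨h',h''⟩
        exacts [hpn2 h', hpn3 h']
      have e3 : s(p,n1) ≠ s(n3,n4) := by
        intro h; rcases Sym2.eq_iff.1 h with ⟨h',h''⟩|⟨h',h''⟩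
        exacts [hpn3 h', hpn4 h']
      have e4 : s(p,n1) ≠ s(n4,q) := by
        intro h; rcases Sym2.eq_iff.1 h with ⟨h',h''⟩|⟨h',h''⟩
        exacts [hpn4 h', hd14 h'']
      have e5 : s(n1,n2) ≠ s(n2,n3) := by
        intro h; rcases Sym2.eq_iff.1 h with ⟨h',h''⟩|⟨h',h''⟩
        exacts [hd12 h', hd13 h']
      have e6 : s(n1,n2) ≠ s(n3,n4) := by
        intro h; rcases Sym2.eq_iff.1 h with ⟨h',h''⟩|⟨h',h''⟩
        exacts [hd13 h', hd14 h']
      have e7 : s(n1,n2) ≠ s(n4,q) := by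
        intro h; rcases Sym2.eq_iff.1 h with ⟨h',h''⟩|⟨h',h''⟩
        exacts [hd14 h', hqn1 h'.symm]
      have e8 : s(n2,n3) ≠ s(n3,n4) := by
        intro h; rcases Sym2.eq_iff.1 h with ⟨h',h''⟩|⟨h',h''⟩
        exacts [hd23 h', hd24 h']
      have e9 : s(n2,n3) ≠ s(n4,q) := by
        intro h; rcases Sym2.eq_iff.1 h with ⟨h',h''⟩|⟨h',h''⟩
        exacts [hd24 h', hqn2 h'.symm]
      have e10 : s(n3,n4) ≠ s(n4,q) := by
        intro h; rcases Sym2.eq_iff.1 h with ⟨h',h''⟩|⟨h',h''⟩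
        exacts [hd34 h', hqn3 h'.symm]
      refine List.nodup_cons.2 ⟨?_, List.nodup_cons.2 ⟨?_, List.nodup_cons.2 ⟨?_,
        List.nodup_cons.2 ⟨?_, List.nodup_singleton _⟩⟩⟩⟩ <;>
        simp [e1, e2, e3, e4, e5, e6, e7, e8, e9, e10]
    · -- disjoint
      intro E hE hE'
      have : ∃ m ∈ ([n1,n2,n3,n4] : List P2), m ∈ E := by
        simp only [List.mem_cons, List.not_mem_nil, or_false, List.mem_singleton] at hE
        rcases hE with rfl | rfl | rfl | rfl | rfl
        exacts [⟨n1, by simp, by simp⟩, ⟨n1, by simp, by simp⟩, ⟨n2, by simp, by simp⟩,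
          ⟨n3, by simp, by simp⟩, ⟨n4, by simp, by simp⟩]
      obtain ⟨m, hm, hmE⟩ := this
      exact hfresh m hm (hsub E hE' m hmE)
  · -- membership
    intro x
    simp only [List.mem_append, List.mem_cons, List.not_mem_nil, or_false]
    tauto
  · -- preservation
    intro E hE hEne
    rw [hLd] at hE
    rw [hL'd]
    rcases List.mem_append.1 hE with h | h
    · exact List.mem_append.2 (Or.inl h)
    · rcases List.mem_cons.1 h with rfl | h
      · exact absurd rfl hEne
      · refine List.mem_append.2 (Or.inr ?_); simp [h]
  · -- new edges present
    intro E hE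
    rw [hL'd]
    refine List.mem_append.2 (Or.inr ?_)
    simp only [List.mem_cons, List.not_mem_nil, or_false, List.mem_singleton] at hE ⊢
    tauto




structure Inv (X : Set P2) (L : List P2) : Prop where
  hne : L ≠ []
  hlen : 5 ≤ L.length
  hchain : L.Chain' adjp
  hcyc : L.head? = L.getLast?
  hnodup : L.tail.Nodup
  hmem : ∀ p, p ∈ L ↔ cell p ∈ X
  hedge : (cedges L).Nodup
  hbound : ∀ d ∈ X, ∀ e ∈ dirs, d + e ∉ X → sideS d e ∈ cedges L

lemma base (d : P2) : Inv {d} [(2*d.1,2*d.2),(2*d.1+1,2*d.2),(2*d.1+1,2*d.2+1),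
    (2*d.1,2*d.2+1),(2*d.1,2*d.2)] := by
  constructor
  · simp
  · simp
  · refine List.isChain_cons_cons.2 ⟨?_, List.isChain_cons_cons.2 ⟨?_, List.isChain_cons_cons.2 ⟨?_,
      List.isChain_cons_cons.2 ⟨?_, List.isChain_singleton _⟩⟩⟩⟩ <;> (rw [adjp_iff]; simp; try omega)
  · simp
  · simp [List.nodup_cons, Prod.ext_iff]
  · intro p
    simp only [List.mem_cons, List.not_mem_nil, or_false, Set.mem_singleton_iff]
    rw [cell_eq]
    simp only [Prod.ext_iff]
    omega
  · simp [cedges_cons₂, List.nodup_cons, Sym2.eq_iff, Prod.ext_iff]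
  · intro d2 hd2 e he _
    have hdd : d2 = d := Set.eq_of_mem_singleton hd2
    subst hdd
    simp only [dirs, List.mem_cons, List.not_mem_nil, or_false] at he
    have h10 : sideS d2 ((1:ℤ),(0:ℤ)) = s((2*d2.1+1, 2*d2.2), (2*d2.1+1, 2*d2.2+1)) := by
      rw [sideS]; norm_num [side, Prod.ext_iff]
    have hm10 : sideS d2 ((-1:ℤ),(0:ℤ)) = s((2*d2.1, 2*d2.2), (2*d2.1, 2*d2.2+1)) := by
      rw [sideS]; norm_num [side, Prod.ext_iff]
    have h01 : sideS d2 ((0:ℤ),(1:ℤ)) = s((2*d2.1, 2*d2.2+1), (2*d2.1+1, 2*d2.2+1)) := by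
      rw [sideS]; norm_num [side, Prod.ext_iff]
    have h0m1 : sideS d2 ((0:ℤ),(-1:ℤ)) = s((2*d2.1, 2*d2.2), (2*d2.1+1, 2*d2.2)) := by
      rw [sideS]; norm_num [side, Prod.ext_iff]
    rcases he with rfl | rfl | rfl | rfl
    · rw [h10]; simp
    · rw [hm10]
      have : s((2*d2.1, 2*d2.2), (2*d2.1, 2*d2.2+1)) = s((2*d2.1, 2*d2.2+1), (2*d2.1, 2*d2.2)) :=
        Sym2.eq_swap.symm
      rw [this]; simp
    · rw [h01]
      have : s((2*d2.1, 2*d2.2+1), (2*d2.1+1, 2*d2.2+1)) = s((2*d2.1+1, 2*d2.2+1), (2*d2.1, 2*d2.2+1)) :=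
        Sym2.eq_swap.symm
      rw [this]; simp
    · rw [h0m1]; simp

lemma assemble {X' : Set P2} {c d e eb p q n1 n2 n3 n4 : P2} {L L' : List P2}
    (hI : Inv X' L)
    (hd : d ∈ X') (he : e ∈ dirs) (hde : d = c + e)
    (heb : eb ∈ dirs) (hceb : d + eb = c)
    (hside : side d eb = (p, q))
    (hblock : ∀ x : P2, cell x = c ↔ x ∈ ([n1,n2,n3,n4] : List P2))
    (hsides : ∀ e' ∈ dirs, e' ≠ e → sideS c e' ∈ ([s(n1,n2),s(n2,n3),s(n3,n4)] : List (Sym2 P2)))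
    (hne : L' ≠ []) (hlen : 5 ≤ L'.length)
    (hchain : L'.Chain' adjp) (hcyc : L'.head? = L'.getLast?)
    (hnodup : L'.tail.Nodup) (hedge : (cedges L').Nodup)
    (hmemb : ∀ x, x ∈ L' ↔ x ∈ L ∨ x ∈ ([n1,n2,n3,n4] : List P2))
    (hpres : ∀ E ∈ cedges L, E ≠ s(p,q) → E ∈ cedges L')
    (hnew : ∀ E ∈ ([s(n1,n2),s(n2,n3),s(n3,n4)] : List (Sym2 P2)), E ∈ cedges L') :
    Inv (insert c X') L' := by
  refine ⟨hne, hlen, hchain, hcyc, hnodup, ?_, hedge, ?_⟩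
  · intro x
    rw [hmemb x, hI.hmem x, ← hblock x, Set.mem_insert_iff]
    tauto
  · intro d' hd' e' he' hout
    rcases Set.mem_insert_iff.1 hd' with rfl | hd'
    · have hne' : e' ≠ e := by
        rintro rfl
        exact hout (by rw [← hde]; exact Set.mem_insert_iff.2 (Or.inr hd))
      exact hnew _ (hsides e' he' hne')
    · have hout' : d' + e' ∉ X' := fun h => hout (Set.mem_insert_iff.2 (Or.inr h))
      refine hpres _ (hI.hbound d' hd' e' he' hout') ?_
      intro hEq
      have hsq : sideS d eb = s(p,q) := by rw [sideS, hside]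
      obtain ⟨rfl, rfl⟩ := side_inj he' heb (hEq.trans hsq.symm)
      rw [hceb] at hout
      exact hout (Set.mem_insert _ _)


lemma step {X' : Set P2} {L : List P2} (hI : Inv X' L) {c d : P2}
    (hd : d ∈ X') (hc : c ∉ X')
    {e eb : P2} (he : e ∈ dirs) (hde : d = c + e) (heb : eb ∈ dirs) (hceb : d + eb = c)
    {p q n1 n2 n3 n4 : P2} (hside : side d eb = (p, q))
    (a1 : adjp p n1) (a2 : adjp n1 n2) (a3 : adjp n2 n3) (a4 : adjp n3 n4) (a5 : adjp n4 q)
    (hnsnd : ([n1,n2,n3,n4] : List P2).Nodup)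
    (hblock : ∀ x : P2, cell x = c ↔ x ∈ ([n1,n2,n3,n4] : List P2))
    (hsides : ∀ e' ∈ dirs, e' ≠ e →
      sideS c e' ∈ ([s(n1,n2),s(n2,n3),s(n3,n4)] : List (Sym2 P2))) :
    ∃ L', Inv (insert c X') L' := by
  have hfresh : ∀ m ∈ ([n1,n2,n3,n4] : List P2), m ∉ L := by
    intro m hm hmL
    exact hc (((hblock m).2 hm) ▸ (hI.hmem m).1 hmL)
  have hbd : s(p,q) ∈ cedges L := by
    have := hI.hbound d hd eb heb (by rw [hceb]; exact hc)
    rwa [sideS, hside] at this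
  obtain ⟨A, B, hAB | hAB⟩ := exists_of_mem_cedges hbd
  · obtain ⟨c1, c2, c3, c4, c5, c6, c7⟩ :=
      splice (hAB ▸ hI.hchain) (hAB ▸ hI.hcyc) (hAB ▸ hI.hnodup) (hAB ▸ hI.hedge)
        a1 a2 a3 a4 a5 hnsnd (fun m hm => hAB ▸ hfresh m hm)
    refine ⟨A ++ p::n1::n2::n3::n4::q::B,
      assemble hI hd he hde heb hceb hside hblock hsides ?_ ?_ c1 c2 c3 c4 ?_ ?_ ?_⟩
    · simp
    · simp; omega
    · intro x; rw [hAB]; exact c5 x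
    · intro E hE; rw [hAB] at hE; exact c6 E hE
    · intro E hE
      simp only [List.mem_cons, List.not_mem_nil, or_false, List.mem_singleton] at hE
      rcases hE with rfl | rfl | rfl
      · exact c7 _ (by simp)
      · exact c7 _ (by simp)
      · exact c7 _ (by simp)
  · have hns' : ([n4,n3,n2,n1] : List P2).Nodup := by simp at hnsnd ⊢; tauto
    obtain ⟨c1, c2, c3, c4, c5, c6, c7⟩ :=
      splice (hAB ▸ hI.hchain) (hAB ▸ hI.hcyc) (hAB ▸ hI.hnodup) (hAB ▸ hI.hedge)
        (adjp_symm a5) (adjp_symm a4) (adjp_symm a3) (adjp_symm a2) (adjp_symm a1)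
        hns' (fun m hm => hAB ▸ hfresh m (by simp at hm ⊢; tauto))
    refine ⟨A ++ q::n4::n3::n2::n1::p::B,
      assemble hI hd he hde heb hceb hside hblock hsides ?_ ?_ c1 c2 c3 c4 ?_ ?_ ?_⟩
    · simp
    · simp; omega
    · intro x
      rw [hAB]
      rw [c5 x]
      simp only [List.mem_cons, List.not_mem_nil, or_false]
      tauto
    · intro E hE hEne
      rw [hAB] at hE
      refine c6 E hE ?_
      rwa [Sym2.eq_swap]
    · intro E hE
      simp only [List.mem_cons, List.not_mem_nil, or_false, List.mem_singleton] at hE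
      rcases hE with rfl | rfl | rfl
      · have := c7 s(n2,n1) (by simp); rwa [Sym2.eq_swap] at this
      · have := c7 s(n3,n2) (by simp); rwa [Sym2.eq_swap] at this
      · have := c7 s(n4,n3) (by simp); rwa [Sym2.eq_swap] at this


lemma extend {X' : Set P2} {L : List P2} (hI : Inv X' L) {c d : P2}
    (hd : d ∈ X') (hc : c ∉ X') (hadj : adjp c d) :
    ∃ L', Inv (insert c X') L' := by
  have h4 : d = (c.1+1, c.2) ∨ d = (c.1-1, c.2) ∨ d = (c.1, c.2+1) ∨ d = (c.1, c.2-1) := by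
    rw [adjp_iff] at hadj
    simp only [Prod.ext_iff]
    omega
  rcases h4 with rfl | rfl | rfl | rfl
  · refine step hI hd hc (e := ((1,0) : P2)) (eb := ((-1,0) : P2))
      (p := ((2*c.1+2, 2*c.2) : P2)) (q := ((2*c.1+2, 2*c.2+1) : P2)) (n1 := ((2*c.1+1, 2*c.2) : P2)) (n2 := ((2*c.1, 2*c.2) : P2)) (n3 := ((2*c.1, 2*c.2+1) : P2)) (n4 := ((2*c.1+1, 2*c.2+1) : P2))
      (by simp [dirs]) (by simp [Prod.ext_iff]; try omega) (by simp [dirs]) (by simp [Prod.ext_iff]; try omega)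
      (by norm_num [side, Prod.ext_iff]; try omega)
      ?_ ?_ ?_ ?_ ?_ ?_ ?_ ?_ <;> try (rw [adjp_iff]; simp; try omega)
    · simp [List.nodup_cons, Prod.ext_iff]
    · intro x
      rw [cell_eq]
      simp only [List.mem_cons, List.not_mem_nil, or_false, Prod.ext_iff]
      omega
    · intro e' he' hne'
      simp only [dirs, List.mem_cons, List.not_mem_nil, or_false] at he'
      rcases he' with rfl | rfl | rfl | rfl
      · exact absurd rfl hne'
      · have hx : sideS c ((-1,0) : P2) = s((((2*c.1, 2*c.2) : P2) : P2), (((2*c.1, 2*c.2+1) : P2) : P2)) := by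
          rw [sideS]; norm_num [side, Prod.ext_iff]; try omega
        rw [hx]
        simp
      · have hx : sideS c ((0,1) : P2) = s((((2*c.1, 2*c.2+1) : P2) : P2), (((2*c.1+1, 2*c.2+1) : P2) : P2)) := by
          rw [sideS]; norm_num [side, Prod.ext_iff]; try omega
        rw [hx]
        simp
      · have hx : sideS c ((0,-1) : P2) = s((((2*c.1, 2*c.2) : P2) : P2), (((2*c.1+1, 2*c.2) : P2) : P2)) := by
          rw [sideS]; norm_num [side, Prod.ext_iff]; try omega
        rw [hx]
        rw [Sym2.eq_swap]
        simp

  · refine step hI hd hc (e := ((-1,0) : P2)) (eb := ((1,0) : P2))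
      (p := ((2*c.1-1, 2*c.2) : P2)) (q := ((2*c.1-1, 2*c.2+1) : P2)) (n1 := ((2*c.1, 2*c.2) : P2)) (n2 := ((2*c.1+1, 2*c.2) : P2)) (n3 := ((2*c.1+1, 2*c.2+1) : P2)) (n4 := ((2*c.1, 2*c.2+1) : P2))
      (by simp [dirs]) (by simp [Prod.ext_iff]; try omega) (by simp [dirs]) (by simp [Prod.ext_iff]; try omega)
      (by norm_num [side, Prod.ext_iff]; try omega)
      ?_ ?_ ?_ ?_ ?_ ?_ ?_ ?_ <;> try (rw [adjp_iff]; simp; try omega)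
    · simp [List.nodup_cons, Prod.ext_iff]
    · intro x
      rw [cell_eq]
      simp only [List.mem_cons, List.not_mem_nil, or_false, Prod.ext_iff]
      omega
    · intro e' he' hne'
      simp only [dirs, List.mem_cons, List.not_mem_nil, or_false] at he'
      rcases he' with rfl | rfl | rfl | rfl
      · have hx : sideS c ((1,0) : P2) = s((((2*c.1+1, 2*c.2) : P2) : P2), (((2*c.1+1, 2*c.2+1) : P2) : P2)) := by
          rw [sideS]; norm_num [side, Prod.ext_iff]; try omega
        rw [hx]
        simp
      · exact absurd rfl hne'
      · have hx : sideS c ((0,1) : P2) = s((((2*c.1, 2*c.2+1) : P2) : P2), (((2*c.1+1, 2*c.2+1) : P2) : P2)) := by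
          rw [sideS]; norm_num [side, Prod.ext_iff]; try omega
        rw [hx]
        rw [Sym2.eq_swap]
        simp
      · have hx : sideS c ((0,-1) : P2) = s((((2*c.1, 2*c.2) : P2) : P2), (((2*c.1+1, 2*c.2) : P2) : P2)) := by
          rw [sideS]; norm_num [side, Prod.ext_iff]; try omega
        rw [hx]
        simp

  · refine step hI hd hc (e := ((0,1) : P2)) (eb := ((0,-1) : P2))
      (p := ((2*c.1, 2*c.2+2) : P2)) (q := ((2*c.1+1, 2*c.2+2) : P2)) (n1 := ((2*c.1, 2*c.2+1) : P2)) (n2 := ((2*c.1, 2*c.2) : P2)) (n3 := ((2*c.1+1, 2*c.2) : P2)) (n4 := ((2*c.1+1, 2*c.2+1) : P2))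
      (by simp [dirs]) (by simp [Prod.ext_iff]; try omega) (by simp [dirs]) (by simp [Prod.ext_iff]; try omega)
      (by norm_num [side, Prod.ext_iff]; try omega)
      ?_ ?_ ?_ ?_ ?_ ?_ ?_ ?_ <;> try (rw [adjp_iff]; simp; try omega)
    · simp [List.nodup_cons, Prod.ext_iff]
    · intro x
      rw [cell_eq]
      simp only [List.mem_cons, List.not_mem_nil, or_false, Prod.ext_iff]
      omega
    · intro e' he' hne'
      simp only [dirs, List.mem_cons, List.not_mem_nil, or_false] at he'
      rcases he' with rfl | rfl | rfl | rfl
      · have hx : sideS c ((1,0) : P2) = s((((2*c.1+1, 2*c.2) : P2) : P2), (((2*c.1+1, 2*c.2+1) : P2) : P2)) := by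
          rw [sideS]; norm_num [side, Prod.ext_iff]; try omega
        rw [hx]
        simp
      · have hx : sideS c ((-1,0) : P2) = s((((2*c.1, 2*c.2) : P2) : P2), (((2*c.1, 2*c.2+1) : P2) : P2)) := by
          rw [sideS]; norm_num [side, Prod.ext_iff]; try omega
        rw [hx]
        rw [Sym2.eq_swap]
        simp
      · exact absurd rfl hne'
      · have hx : sideS c ((0,-1) : P2) = s((((2*c.1, 2*c.2) : P2) : P2), (((2*c.1+1, 2*c.2) : P2) : P2)) := by
          rw [sideS]; norm_num [side, Prod.ext_iff]; try omega
        rw [hx]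
        simp

  · refine step hI hd hc (e := ((0,-1) : P2)) (eb := ((0,1) : P2))
      (p := ((2*c.1, 2*c.2-1) : P2)) (q := ((2*c.1+1, 2*c.2-1) : P2)) (n1 := ((2*c.1, 2*c.2) : P2)) (n2 := ((2*c.1, 2*c.2+1) : P2)) (n3 := ((2*c.1+1, 2*c.2+1) : P2)) (n4 := ((2*c.1+1, 2*c.2) : P2))
      (by simp [dirs]) (by simp [Prod.ext_iff]; try omega) (by simp [dirs]) (by simp [Prod.ext_iff]; try omega)
      (by norm_num [side, Prod.ext_iff]; try omega)
      ?_ ?_ ?_ ?_ ?_ ?_ ?_ ?_ <;> try (rw [adjp_iff]; simp; try omega)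
    · simp [List.nodup_cons, Prod.ext_iff]
    · intro x
      rw [cell_eq]
      simp only [List.mem_cons, List.not_mem_nil, or_false, Prod.ext_iff]
      omega
    · intro e' he' hne'
      simp only [dirs, List.mem_cons, List.not_mem_nil, or_false] at he'
      rcases he' with rfl | rfl | rfl | rfl
      · have hx : sideS c ((1,0) : P2) = s((((2*c.1+1, 2*c.2) : P2) : P2), (((2*c.1+1, 2*c.2+1) : P2) : P2)) := by
          rw [sideS]; norm_num [side, Prod.ext_iff]; try omega
        rw [hx]
        rw [Sym2.eq_swap]
        simp
      · have hx : sideS c ((-1,0) : P2) = s((((2*c.1, 2*c.2) : P2) : P2), (((2*c.1, 2*c.2+1) : P2) : P2)) := by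
          rw [sideS]; norm_num [side, Prod.ext_iff]; try omega
        rw [hx]
        simp
      · have hx : sideS c ((0,1) : P2) = s((((2*c.1, 2*c.2+1) : P2) : P2), (((2*c.1+1, 2*c.2+1) : P2) : P2)) := by
          rw [sideS]; norm_num [side, Prod.ext_iff]; try omega
        rw [hx]
        simp
      · exact absurd rfl hne'


def Reach (S : Set P2) : P2 → P2 → Prop :=
  Relation.ReflTransGen (fun a b => a ∈ S ∧ b ∈ S ∧ adjp a b)

lemma reach_symm {S : Set P2} {a b : P2} (h : Reach S a b) : Reach S b a :=
  by
    induction h with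
    | refl => exact Relation.ReflTransGen.refl
    | tail _ hx ih => exact Relation.ReflTransGen.head ⟨hx.2.1, hx.1, adjp_symm hx.2.2⟩ ih

lemma reach_of_walk {S T : Set P2} : ∀ {u v : S} (w : (gridGraph S).Walk u v),
    (∀ x ∈ w.support, (x : P2) ∈ T) → Reach T u v := by
  intro u v w
  induction w with
  | nil => exact fun _ => Relation.ReflTransGen.refl
  | @cons a b c h w ih =>
    intro hT
    refine Relation.ReflTransGen.head
      ⟨hT _ (by simp), hT _ ?_, gridGraph_adj.1 h⟩ (ih fun x hx => hT x (by simp [hx]))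
    simp only [SimpleGraph.Walk.support_cons, List.mem_cons]
    exact Or.inr w.start_mem_support

lemma connected_of_reach {S : Set P2} (hne : S.Nonempty)
    (h : ∀ p ∈ S, ∀ q ∈ S, Reach S p q) : (gridGraph S).Connected := by
  rw [SimpleGraph.connected_iff]
  have H : ∀ (x y : P2) (hx : x ∈ S), Reach S x y → ∀ (hy : y ∈ S),
      (gridGraph S).Reachable ⟨x, hx⟩ ⟨y, hy⟩ := by
    intro x y hx hr
    induction hr with
    | refl => exact fun _ => SimpleGraph.Reachable.refl _
    | tail h1 h2 ih =>
      exact fun hy => (ih h2.1).trans (SimpleGraph.Adj.reachable (gridGraph_adj.2 h2.2.2))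
  refine ⟨fun u v => ?_, ⟨⟨hne.some, hne.some_mem⟩⟩⟩
  have := H u v u.2 (h u u.2 v v.2) v.2
  simpa using this

lemma reach_of_connected {S : Set P2} (hconn : (gridGraph S).Connected)
    {p q : P2} (hp : p ∈ S) (hq : q ∈ S) : Reach S p q := by
  obtain ⟨w⟩ := hconn ⟨p, hp⟩ ⟨q, hq⟩
  exact reach_of_walk w (fun x _ => x.2)

lemma shortest_support {V : Type*} {G : SimpleGraph V} (hc : G.Connected) {r : V} :
    ∀ {u : V} (w : G.Walk u r), w.length = G.dist u r →
      ∀ x ∈ w.support, x = u ∨ G.dist x r < G.dist u r := by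
  intro u w
  induction w with
  | nil => intro _ x hx; left; simpa using hx
  | @cons a b c h p ih =>
    intro hlen x hx
    have h1 : G.dist b c ≤ p.length := SimpleGraph.dist_le p
    have h2 : G.dist a c ≤ G.dist a b + G.dist b c := hc.dist_triangle
    have h3 : G.dist a b ≤ 1 := by
      have := SimpleGraph.dist_le (SimpleGraph.Walk.cons h SimpleGraph.Walk.nil)
      simpa using this
    have hlen' : p.length + 1 = G.dist a c := by
      simpa [SimpleGraph.Walk.length_cons] using hlen
    have hpl : p.length = G.dist b c := by omega
    rcases List.mem_cons.1 (by simpa using hx) with rfl | hx'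
    · exact Or.inl rfl
    · rcases ih hpl x hx' with rfl | hlt
      · right; omega
      · right; omega

lemma exists_noncut {S : Set P2} (hfin : S.Finite) (hconn : (gridGraph S).Connected)
    (h2 : 1 < S.ncard) :
    ∃ c ∈ S, (S \ {c}).Nonempty ∧ (gridGraph (S \ {c})).Connected ∧
      ∃ d ∈ S \ {c}, adjp c d := by
  haveI := hfin.fintype
  haveI : Nonempty ↥S := hconn.nonempty
  set G := gridGraph S with hG
  obtain ⟨r⟩ := ‹Nonempty ↥S›
  obtain ⟨c, -, hcmax⟩ := Finset.exists_max_image Finset.univ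
    (fun x : ↥S => G.dist x r) Finset.univ_nonempty
  have hcard2 : 1 < Fintype.card ↥S := by
    rw [← Set.toFinset_card]
    rwa [Set.ncard_eq_toFinset_card'] at h2
  obtain ⟨u, hu⟩ := Fintype.exists_ne_of_one_lt_card hcard2 c
  have hdistu : 1 ≤ G.dist u r ∨ 1 ≤ G.dist c r := by
    by_contra hcon
    push_neg at hcon
    have h1 : G.dist u r = 0 := by omega
    have h2 : G.dist c r = 0 := by omega
    have e1 : u = r := (hconn.dist_eq_zero_iff).1 h1
    have e2 : c = r := (hconn.dist_eq_zero_iff).1 h2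
    exact hu (e1.trans e2.symm)
  have hcr : 1 ≤ G.dist c r := by
    rcases hdistu with h | h
    · exact le_trans h (hcmax u (Finset.mem_univ u))
    · exact h
  have hcner : c ≠ r := by
    intro hceq
    rw [hceq] at hcr
    simp [SimpleGraph.dist_self] at hcr
  have havoid : ∀ u : ↥S, u ≠ c → ∃ w : G.Walk u r, c ∉ w.support := by
    intro u hune
    obtain ⟨w, hw⟩ := hconn.exists_walk_length_eq_dist u r
    refine ⟨w, fun hcsup => ?_⟩
    rcases shortest_support hconn w hw c hcsup with rfl | hlt
    · exact hune rfl
    · exact absurd (hcmax u (Finset.mem_univ u)) (by omega)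
  have hreachr : ∀ x : ↥S, x ≠ c → Reach (S \ {c.val}) x.val r.val := by
    intro x hx
    obtain ⟨w, hw⟩ := havoid x hx
    refine reach_of_walk w ?_
    intro y hy
    refine ⟨y.2, ?_⟩
    simp only [Set.mem_singleton_iff]
    intro hyc
    exact hw (by rwa [show y = c from Subtype.ext hyc] at hy)
  refine ⟨c.val, c.2, ⟨r.val, r.2, by
      simp only [Set.mem_singleton_iff]
      exact fun h => hcner (Subtype.ext h.symm)⟩, ?_, ?_⟩
  · refine connected_of_reach ⟨r.val, r.2, by
      simp only [Set.mem_singleton_iff]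
      exact fun h => hcner (Subtype.ext h.symm)⟩ ?_
    intro p hp q hq
    have hp' : p ∈ S := hp.1
    have hq' : q ∈ S := hq.1
    have hpc : (⟨p, hp'⟩ : ↥S) ≠ c := fun h => hp.2 (by rw [← h]; rfl)
    have hqc : (⟨q, hq'⟩ : ↥S) ≠ c := fun h => hq.2 (by rw [← h]; rfl)
    exact (hreachr ⟨p, hp'⟩ hpc).trans (reach_symm (hreachr ⟨q, hq'⟩ hqc))
  · have hreach := reach_of_connected hconn c.2 r.2
    rcases Relation.ReflTransGen.cases_head hreach with heq | ⟨b, hb, -⟩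
    · exact absurd (Subtype.ext heq) hcner
    · exact ⟨b, ⟨hb.2.1, by
        simp only [Set.mem_singleton_iff]
        exact fun h => (adjp_irrefl hb.2.2) h.symm⟩, hb.2.2⟩

lemma inv_exists : ∀ (n : ℕ) (X : Set P2), X.Finite → X.Nonempty →
    (gridGraph X).Connected → X.ncard = n → ∃ L, Inv X L := by
  intro n
  induction n using Nat.strong_induction_on with
  | _ n ih =>
    intro X hfin hne hconn hcard
    by_cases h1 : X.ncard = 1
    · obtain ⟨d, rfl⟩ := Set.ncard_eq_one.1 h1
      exact ⟨_, base d⟩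
    · have hpos : 0 < X.ncard := (Set.ncard_pos hfin).2 hne
      have h2 : 1 < X.ncard := by omega
      obtain ⟨c, hcS, hne', hconn', d, hdS, hadj⟩ := exists_noncut hfin hconn h2
      have hfin' : (X \ {c}).Finite := hfin.diff
      have hcard' : (X \ {c}).ncard = n - 1 := by
        rw [Set.ncard_diff_singleton_of_mem hcS]; omega
      obtain ⟨L, hI⟩ := ih (n - 1) (by omega) _ hfin' hne' hconn' hcard'
      have hc' : c ∉ X \ {c} := by simp
      obtain ⟨L', hI'⟩ := extend hI hdS hc' hadj
      have hins : insert c (X \ {c}) = X := by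
        rw [Set.insert_diff_singleton]
        exact Set.insert_eq_of_mem hcS
      rw [hins] at hI'
      exact ⟨L', hI'⟩


def mkWalk {V : Type*} {G : SimpleGraph V} :
    (l : List V) → (h : l ≠ []) → l.Chain' G.Adj → G.Walk (l.head h) (l.getLast h)
  | [_], _, _ => SimpleGraph.Walk.nil
  | a :: b :: t, _, hc =>
      SimpleGraph.Walk.cons (List.isChain_cons_cons.1 hc).1
        (mkWalk (b :: t) (by simp) (List.isChain_cons_cons.1 hc).2)

lemma mkWalk_support {V : Type*} {G : SimpleGraph V} :
    ∀ (l : List V) (h : l ≠ []) (hc : l.Chain' G.Adj), (mkWalk l h hc).support = l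
  | [_], _, _ => rfl
  | _ :: b :: t, _, hc => by
      exact congrArg (List.cons _) (mkWalk_support (b :: t) (by simp) (List.isChain_cons_cons.1 hc).2)

lemma mkWalk_edges {V : Type*} {G : SimpleGraph V} :
    ∀ (l : List V) (h : l ≠ []) (hc : l.Chain' G.Adj), (mkWalk l h hc).edges = cedges l
  | [_], _, _ => rfl
  | a :: b :: t, _, hc => by
      exact congrArg (List.cons _) (mkWalk_edges (b :: t) (by simp) (List.isChain_cons_cons.1 hc).2)

end HamAux

/-- For every nonempty coordinated shape `X ⊂ ℤ²` (finite, with connected grid graph),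
the grid graph induced by the 2-scaling `X²` has a Hamiltonian cycle. -/
theorem scaling_two_hamiltonian (X : Set (ℤ × ℤ)) (hfin : X.Finite) (hne : X.Nonempty)
    (hconn : (gridGraph X).Connected) :
    ∃ (v : scaling X 2) (w : (gridGraph (scaling X 2)).Walk v v),
      w.IsHamiltonianCycle := by
  classical
  obtain ⟨L, hI⟩ := HamAux.inv_exists X.ncard X hfin hne hconn rfl
  have hmemL : ∀ x ∈ L, x ∈ scaling X 2 := fun x hx =>
    HamAux.mem_scaling.2 ((hI.hmem x).1 hx)
  set Ls : List ↥(scaling X 2) := L.pmap (fun x hx => ⟨x, hx⟩) hmemL with hLs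
  have hmap : Ls.map Subtype.val = L := by
    rw [hLs, List.map_pmap]
    exact List.pmap_eq_map _ ▸ List.map_id L
  have hlenLs : Ls.length = L.length := by
    rw [← hmap, List.length_map]
  have hLsne : Ls ≠ [] := by
    intro h
    apply hI.hne
    rw [← hmap, h, List.map_nil]
  have hchain : Ls.Chain' (gridGraph (scaling X 2)).Adj := by
    have h0 := hI.hchain
    rw [← hmap] at h0
    exact (List.isChain_map Subtype.val).1 h0
  have heq : Ls.getLast hLsne = Ls.head hLsne := by
    apply Subtype.ext
    have e1 : L.head? = L.getLast? := hI.hcyc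
    rw [← hmap, List.head?_map, List.getLast?_map] at e1
    rw [List.head?_eq_head hLsne, List.getLast?_eq_getLast hLsne] at e1
    simpa using e1.symm
  have htail_map : Ls.tail.map Subtype.val = L.tail := by
    rw [← hmap]
    exact List.map_tail
  have hLtailnd : Ls.tail.Nodup := by
    refine List.Nodup.of_map Subtype.val ?_
    rw [htail_map]
    exact hI.hnodup
  have hmem_tail : ∀ x ∈ L, x ∈ L.tail := by
    intro x hx
    obtain ⟨h0, t, rfl⟩ : ∃ h0 t, L = h0 :: t := by
      cases L with
      | nil => exact absurd rfl hI.hne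
      | cons h0 t => exact ⟨h0, t, rfl⟩
    have htne : t ≠ [] := by
      have := hI.hlen
      intro h; rw [h] at this; simp at this
    rcases List.mem_cons.1 hx with rfl | hx'
    · -- head = getLast ∈ t
      have e1 := hI.hcyc
      rw [List.head?_eq_head (by simp), List.getLast?_eq_getLast (by simp)] at e1
      have e2 : x = (x :: t).getLast (by simp) := by
        simpa using e1
      rw [List.getLast_cons htne] at e2
      rw [List.tail_cons, e2]
      exact List.getLast_mem htne
    · simpa using hx'
  set w := HamAux.mkWalk Ls hLsne hchain with hw
  refine ⟨Ls.head hLsne, w.copy rfl heq, ?_⟩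
  have hsupp : (w.copy rfl heq).support = Ls := by
    rw [SimpleGraph.Walk.support_copy, hw, HamAux.mkWalk_support]
  rw [SimpleGraph.Walk.isHamiltonianCycle_iff_isCycle_and_support_count_tail_eq_one]
  constructor
  · rw [SimpleGraph.Walk.isCycle_def]
    refine ⟨?_, ?_, ?_⟩
    · rw [SimpleGraph.Walk.isTrail_def, SimpleGraph.Walk.edges_copy, hw,
        HamAux.mkWalk_edges]
      refine List.Nodup.of_map (Sym2.map Subtype.val) ?_
      rw [← HamAux.cedges_map, hmap]
      exact hI.hedge
    · intro hnil
      have := hsupp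
      rw [hnil, SimpleGraph.Walk.support_nil] at this
      have hl := congrArg List.length this
      rw [hlenLs] at hl
      have := hI.hlen
      simp at hl
      omega
    · rw [hsupp]
      exact hLtailnd
  · intro a
    have haL : (a : ℤ × ℤ) ∈ L := (hI.hmem a).2 (HamAux.mem_scaling.1 a.2)
    have haT : (a : ℤ × ℤ) ∈ L.tail := hmem_tail _ haL
    have haTs : a ∈ Ls.tail := by
      rw [← htail_map] at haT
      obtain ⟨b, hb, hba⟩ := List.mem_map.1 haT
      rwa [show b = a from Subtype.ext hba] at hb
    rw [hsupp]
    exact @List.count_eq_one_of_mem _ instBEqOfDecidableEq _ _ _ hLtailnd haTs
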